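/- For m ∈ ℕ define b_m = Σ (1 + j0)(1 + j4)·x1^{j1} x2^{j2} x3^{j3} x4^{j4}, the sum being over all (j0, j1, j2, j3, j4) ∈ ℕ⁵ with j0 + j1 + 2j2 + j3 + j4 = m and j0 < j3. Then in R[[t]] one has (Σ_{m=0}^∞ b_m t^m) · (1 − t·x1)(1 − t²·x2)(1 − t·x3)(1 − t²·x3)²(1 − t·x4)² = x3·t. -/

import Mathlib

open scoped BigOperators

namespace Stmt4Aux
open Finset MvPolynomial

abbrev R4 : Type := MvPolynomial (Fin 4) ℚ
abbrev T5 : Type := ℕ × ℕ × ℕ × ℕ × ℕ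

lemma mk_mul_one_sub (f : ℕ → R4) (a : R4) (k : ℕ) :
    PowerSeries.mk f * (1 - PowerSeries.C (R := R4) a * PowerSeries.X ^ k) =
    PowerSeries.mk (fun n => f n - if k ≤ n then a * f (n - k) else 0) := by
  ext n
  simp only [mul_sub, mul_one, map_sub, PowerSeries.coeff_mk]
  congr 1
  rw [show PowerSeries.mk f * (PowerSeries.C (R := R4) a * PowerSeries.X ^ k)
      = PowerSeries.C (R := R4) a * (PowerSeries.mk f * PowerSeries.X ^ k) by ring]
  rw [PowerSeries.coeff_C_mul, PowerSeries.coeff_mul_X_pow']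
  simp [PowerSeries.coeff_mk]

def Box (m : ℕ) : Finset T5 :=
  Finset.range (m + 1) ×ˢ Finset.range (m + 1) ×ˢ Finset.range (m + 1) ×ˢ
    Finset.range (m + 1) ×ˢ Finset.range (m + 1)

lemma mem_box {m : ℕ} {j : T5} :
    j ∈ Box m ↔ j.1 ≤ m ∧ j.2.1 ≤ m ∧ j.2.2.1 ≤ m ∧ j.2.2.2.1 ≤ m ∧ j.2.2.2.2 ≤ m := by
  simp [Box, Finset.mem_product, Nat.lt_succ_iff]

noncomputable def b (m : ℕ) : R4 :=
  ∑ j ∈ (Box m).filter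
      (fun j => j.1 + j.2.1 + 2 * j.2.2.1 + j.2.2.2.1 + j.2.2.2.2 = m ∧ j.1 < j.2.2.2.1),
    (((1 + j.1) * (1 + j.2.2.2.2) : ℕ) : R4) *
      X 0 ^ j.2.1 * X 1 ^ j.2.2.1 * X 2 ^ j.2.2.2.1 * X 3 ^ j.2.2.2.2

noncomputable def b1 (m : ℕ) : R4 :=
  ∑ j ∈ (Box m).filter
      (fun j => (j.1 + j.2.1 + 2 * j.2.2.1 + j.2.2.2.1 + j.2.2.2.2 = m ∧ j.1 < j.2.2.2.1)
        ∧ j.2.1 = 0),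
    (((1 + j.1) * (1 + j.2.2.2.2) : ℕ) : R4) *
      X 0 ^ j.2.1 * X 1 ^ j.2.2.1 * X 2 ^ j.2.2.2.1 * X 3 ^ j.2.2.2.2

noncomputable def b2 (m : ℕ) : R4 :=
  ∑ j ∈ (Box m).filter
      (fun j => (j.1 + j.2.1 + 2 * j.2.2.1 + j.2.2.2.1 + j.2.2.2.2 = m ∧ j.1 < j.2.2.2.1)
        ∧ j.2.1 = 0 ∧ j.2.2.1 = 0),
    (((1 + j.1) * (1 + j.2.2.2.2) : ℕ) : R4) *
      X 0 ^ j.2.1 * X 1 ^ j.2.2.1 * X 2 ^ j.2.2.2.1 * X 3 ^ j.2.2.2.2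

noncomputable def b3 (m : ℕ) : R4 :=
  ∑ j ∈ (Box m).filter
      (fun j => (j.1 + j.2.1 + 2 * j.2.2.1 + j.2.2.2.1 + j.2.2.2.2 = m ∧ j.1 < j.2.2.2.1)
        ∧ j.2.1 = 0 ∧ j.2.2.1 = 0),
    ((1 + j.1 : ℕ) : R4) *
      X 0 ^ j.2.1 * X 1 ^ j.2.2.1 * X 2 ^ j.2.2.2.1 * X 3 ^ j.2.2.2.2

noncomputable def b4 (m : ℕ) : R4 :=
  ∑ j ∈ (Box m).filter
      (fun j => (j.1 + j.2.1 + 2 * j.2.2.1 + j.2.2.2.1 + j.2.2.2.2 = m ∧ j.1 < j.2.2.2.1)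
        ∧ j.2.1 = 0 ∧ j.2.2.1 = 0 ∧ j.2.2.2.2 = 0),
    ((1 + j.1 : ℕ) : R4) *
      X 0 ^ j.2.1 * X 1 ^ j.2.2.1 * X 2 ^ j.2.2.2.1 * X 3 ^ j.2.2.2.2

noncomputable def b5 (m : ℕ) : R4 :=
  ∑ j ∈ (Box m).filter
      (fun j => (j.1 + j.2.1 + 2 * j.2.2.1 + j.2.2.2.1 + j.2.2.2.2 = m
          ∧ j.2.2.2.1 = j.1 + 1)
        ∧ j.2.1 = 0 ∧ j.2.2.1 = 0 ∧ j.2.2.2.2 = 0),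
    ((1 + j.1 : ℕ) : R4) *
      X 0 ^ j.2.1 * X 1 ^ j.2.2.1 * X 2 ^ j.2.2.2.1 * X 3 ^ j.2.2.2.2

noncomputable def b6 (m : ℕ) : R4 :=
  ∑ j ∈ (Box m).filter
      (fun j => (j.1 + j.2.1 + 2 * j.2.2.1 + j.2.2.2.1 + j.2.2.2.2 = m
          ∧ j.2.2.2.1 = j.1 + 1)
        ∧ j.2.1 = 0 ∧ j.2.2.1 = 0 ∧ j.2.2.2.2 = 0),
    X 0 ^ j.2.1 * X 1 ^ j.2.2.1 * X 2 ^ j.2.2.2.1 * X 3 ^ j.2.2.2.2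

lemma b_zero : b 0 = 0 := by
  rw [b, show (Box 0).filter _ = (∅ : Finset T5) from ?_, Finset.sum_empty]
  ext ⟨j0, j1, j2, j3, j4⟩
  simp only [Finset.mem_filter, mem_box, Finset.notMem_empty, iff_false]
  omega


lemma empty_zero (m : ℕ) (p : T5 → Prop) [DecidablePred p] (f : T5 → R4)
    (h : ∀ j : T5, ¬ p j) : ∑ j ∈ (Box m).filter p, f j = 0 := by
  rw [show (Box m).filter p = (∅ : Finset T5) from ?_, Finset.sum_empty]
  ext j
  simp only [Finset.mem_filter, Finset.notMem_empty, iff_false]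
  exact fun hj => h j hj.2

lemma b1_zero : b1 0 = 0 := by
  apply empty_zero; rintro ⟨j0, j1, j2, j3, j4⟩; dsimp; omega

lemma b2_zero : b2 0 = 0 := by
  apply empty_zero; rintro ⟨j0, j1, j2, j3, j4⟩; dsimp; omega

lemma b3_zero : b3 0 = 0 := by
  apply empty_zero; rintro ⟨j0, j1, j2, j3, j4⟩; dsimp; omega

lemma b4_zero : b4 0 = 0 := by
  apply empty_zero; rintro ⟨j0, j1, j2, j3, j4⟩; dsimp; omega

lemma b5_zero : b5 0 = 0 := by
  apply empty_zero; rintro ⟨j0, j1, j2, j3, j4⟩; dsimp; omega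

lemma b6_zero : b6 0 = 0 := by
  apply empty_zero; rintro ⟨j0, j1, j2, j3, j4⟩; dsimp; omega

lemma singleton_one (p : T5 → Prop) [DecidablePred p]
    (h : ∀ j : T5, p j ↔ j = ((0:ℕ), (0:ℕ), (0:ℕ), (1:ℕ), (0:ℕ))) (f : T5 → R4) :
    ∑ j ∈ (Box 1).filter p, f j = f ((0:ℕ), (0:ℕ), (0:ℕ), (1:ℕ), (0:ℕ)) := by
  rw [show (Box 1).filter p = {((0:ℕ), (0:ℕ), (0:ℕ), (1:ℕ), (0:ℕ))} from ?_,
    Finset.sum_singleton]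
  ext j
  simp only [Finset.mem_filter, Finset.mem_singleton, mem_box]
  constructor
  · exact fun hj => (h j).1 hj.2
  · rintro rfl
    exact ⟨by simp [mem_box], (h _).2 rfl⟩

lemma b1_one : b1 1 = X 2 := by
  rw [b1, singleton_one]
  · simp
  · rintro ⟨j0, j1, j2, j3, j4⟩
    simp only [Prod.mk.injEq]
    omega

lemma b2_one : b2 1 = X 2 := by
  rw [b2, singleton_one]
  · simp
  · rintro ⟨j0, j1, j2, j3, j4⟩
    simp only [Prod.mk.injEq]
    omega

lemma b5_one : b5 1 = X 2 := by
  rw [b5, singleton_one]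
  · simp
  · rintro ⟨j0, j1, j2, j3, j4⟩
    simp only [Prod.mk.injEq]
    omega

lemma b6_one : b6 1 = X 2 := by
  rw [b6, singleton_one]
  · simp
  · rintro ⟨j0, j1, j2, j3, j4⟩
    simp only [Prod.mk.injEq]
    omega


lemma shift1 (m : ℕ) : b (m + 1) - X 0 * b m = b1 (m + 1) := by
  classical
  have hsplit := Finset.sum_filter_add_sum_filter_not
    ((Box (m+1)).filter
      (fun j : T5 => j.1 + j.2.1 + 2 * j.2.2.1 + j.2.2.2.1 + j.2.2.2.2 = m + 1
        ∧ j.1 < j.2.2.2.1))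
    (fun j : T5 => j.2.1 = 0)
    (fun j : T5 => (((1 + j.1) * (1 + j.2.2.2.2) : ℕ) : R4) *
      X 0 ^ j.2.1 * X 1 ^ j.2.2.1 * X 2 ^ j.2.2.2.1 * X 3 ^ j.2.2.2.2)
  have h2 : X 0 * b m =
      ∑ j ∈ (((Box (m+1)).filter
          (fun j : T5 => j.1 + j.2.1 + 2 * j.2.2.1 + j.2.2.2.1 + j.2.2.2.2 = m + 1
            ∧ j.1 < j.2.2.2.1)).filter (fun j : T5 => ¬ j.2.1 = 0)),
        (((1 + j.1) * (1 + j.2.2.2.2) : ℕ) : R4) *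
          X 0 ^ j.2.1 * X 1 ^ j.2.2.1 * X 2 ^ j.2.2.2.1 * X 3 ^ j.2.2.2.2 := by
    rw [b, Finset.mul_sum]
    refine Finset.sum_nbij'
      (fun j : T5 => (j.1, j.2.1 + 1, j.2.2.1, j.2.2.2.1, j.2.2.2.2))
      (fun j : T5 => (j.1, j.2.1 - 1, j.2.2.1, j.2.2.2.1, j.2.2.2.2)) ?_ ?_ ?_ ?_ ?_
    · rintro ⟨j0, j1, j2, j3, j4⟩ h
      simp only [Finset.mem_filter, mem_box] at h ⊢
      omega
    · rintro ⟨j0, j1, j2, j3, j4⟩ h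
      simp only [Finset.mem_filter, mem_box] at h ⊢
      omega
    · rintro ⟨j0, j1, j2, j3, j4⟩ h
      simp
    · rintro ⟨j0, j1, j2, j3, j4⟩ h
      simp only [Finset.mem_filter, mem_box] at h
      simp only [Prod.mk.injEq, eq_self_iff_true, true_and, and_true]
      omega
    · rintro ⟨j0, j1, j2, j3, j4⟩ h
      dsimp only
      ring
  rw [b, ← hsplit, h2]
  rw [add_sub_cancel_right]
  rw [b1]
  apply Finset.sum_congr _ (fun _ _ => rfl)
  ext ⟨j0, j1, j2, j3, j4⟩
  simp only [Finset.mem_filter, mem_box]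
  omega


lemma shift2 (m : ℕ) : b1 (m + 2) - X 1 * b1 m = b2 (m + 2) := by
  classical
  have hsplit := Finset.sum_filter_add_sum_filter_not
    ((Box (m+2)).filter
      (fun j : T5 => (j.1 + j.2.1 + 2 * j.2.2.1 + j.2.2.2.1 + j.2.2.2.2 = m + 2
        ∧ j.1 < j.2.2.2.1) ∧ j.2.1 = 0))
    (fun j : T5 => j.2.2.1 = 0)
    (fun j : T5 => (((1 + j.1) * (1 + j.2.2.2.2) : ℕ) : R4) *
      X 0 ^ j.2.1 * X 1 ^ j.2.2.1 * X 2 ^ j.2.2.2.1 * X 3 ^ j.2.2.2.2)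
  have h2 : X 1 * b1 m =
      ∑ j ∈ (((Box (m+2)).filter
          (fun j : T5 => (j.1 + j.2.1 + 2 * j.2.2.1 + j.2.2.2.1 + j.2.2.2.2 = m + 2
            ∧ j.1 < j.2.2.2.1) ∧ j.2.1 = 0)).filter (fun j : T5 => ¬ j.2.2.1 = 0)),
        (((1 + j.1) * (1 + j.2.2.2.2) : ℕ) : R4) *
          X 0 ^ j.2.1 * X 1 ^ j.2.2.1 * X 2 ^ j.2.2.2.1 * X 3 ^ j.2.2.2.2 := by
    rw [b1, Finset.mul_sum]
    refine Finset.sum_nbij'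
      (fun j : T5 => (j.1, j.2.1, j.2.2.1 + 1, j.2.2.2.1, j.2.2.2.2))
      (fun j : T5 => (j.1, j.2.1, j.2.2.1 - 1, j.2.2.2.1, j.2.2.2.2)) ?_ ?_ ?_ ?_ ?_
    · rintro ⟨j0, j1, j2, j3, j4⟩ h
      simp only [Finset.mem_filter, mem_box] at h ⊢
      omega
    · rintro ⟨j0, j1, j2, j3, j4⟩ h
      simp only [Finset.mem_filter, mem_box] at h ⊢
      omega
    · rintro ⟨j0, j1, j2, j3, j4⟩ h
      simp
    · rintro ⟨j0, j1, j2, j3, j4⟩ h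
      simp only [Finset.mem_filter, mem_box] at h
      simp only [Prod.mk.injEq, eq_self_iff_true, true_and, and_true]
      omega
    · rintro ⟨j0, j1, j2, j3, j4⟩ h
      dsimp only
      ring
  rw [b1, ← hsplit, h2, add_sub_cancel_right, b2]
  apply Finset.sum_congr _ (fun _ _ => rfl)
  ext ⟨j0, j1, j2, j3, j4⟩
  simp only [Finset.mem_filter, mem_box]
  omega

lemma shift3 (m : ℕ) : b2 (m + 1) - X 3 * b2 m = b3 (m + 1) := by
  classical
  have key : X 3 * b2 m =
      ∑ j ∈ (Box (m+1)).filter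
          (fun j : T5 => (j.1 + j.2.1 + 2 * j.2.2.1 + j.2.2.2.1 + j.2.2.2.2 = m + 1
            ∧ j.1 < j.2.2.2.1) ∧ j.2.1 = 0 ∧ j.2.2.1 = 0),
        (((1 + j.1) * j.2.2.2.2 : ℕ) : R4) *
          X 0 ^ j.2.1 * X 1 ^ j.2.2.1 * X 2 ^ j.2.2.2.1 * X 3 ^ j.2.2.2.2 := by
    have hfull := (Finset.sum_filter_of_ne
      (s := (Box (m+1)).filter
        (fun j : T5 => (j.1 + j.2.1 + 2 * j.2.2.1 + j.2.2.2.1 + j.2.2.2.2 = m + 1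
          ∧ j.1 < j.2.2.2.1) ∧ j.2.1 = 0 ∧ j.2.2.1 = 0))
      (f := fun j : T5 => (((1 + j.1) * j.2.2.2.2 : ℕ) : R4) *
        X 0 ^ j.2.1 * X 1 ^ j.2.2.1 * X 2 ^ j.2.2.2.1 * X 3 ^ j.2.2.2.2)
      (p := fun j : T5 => ¬ j.2.2.2.2 = 0)
      (fun x _ hfx => by
        intro hx
        apply hfx
        rw [hx]
        simp)).symm
    rw [b2, Finset.mul_sum, hfull]
    refine Finset.sum_nbij'
      (fun j : T5 => (j.1, j.2.1, j.2.2.1, j.2.2.2.1, j.2.2.2.2 + 1))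
      (fun j : T5 => (j.1, j.2.1, j.2.2.1, j.2.2.2.1, j.2.2.2.2 - 1)) ?_ ?_ ?_ ?_ ?_
    · rintro ⟨j0, j1, j2, j3, j4⟩ h
      simp only [Finset.mem_filter, mem_box] at h ⊢
      omega
    · rintro ⟨j0, j1, j2, j3, j4⟩ h
      simp only [Finset.mem_filter, mem_box] at h ⊢
      omega
    · rintro ⟨j0, j1, j2, j3, j4⟩ h
      simp
    · rintro ⟨j0, j1, j2, j3, j4⟩ h
      simp only [Finset.mem_filter, mem_box] at h
      simp only [Prod.mk.injEq, eq_self_iff_true, true_and, and_true]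
      omega
    · rintro ⟨j0, j1, j2, j3, j4⟩ h
      dsimp only
      push_cast
      ring
  rw [b2, key, ← Finset.sum_sub_distrib, b3]
  apply Finset.sum_congr rfl
  rintro ⟨j0, j1, j2, j3, j4⟩ -
  push_cast
  ring

lemma shift4 (m : ℕ) : b3 (m + 1) - X 3 * b3 m = b4 (m + 1) := by
  classical
  have hsplit := Finset.sum_filter_add_sum_filter_not
    ((Box (m+1)).filter
      (fun j : T5 => (j.1 + j.2.1 + 2 * j.2.2.1 + j.2.2.2.1 + j.2.2.2.2 = m + 1
        ∧ j.1 < j.2.2.2.1) ∧ j.2.1 = 0 ∧ j.2.2.1 = 0))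
    (fun j : T5 => j.2.2.2.2 = 0)
    (fun j : T5 => ((1 + j.1 : ℕ) : R4) *
      X 0 ^ j.2.1 * X 1 ^ j.2.2.1 * X 2 ^ j.2.2.2.1 * X 3 ^ j.2.2.2.2)
  have h2 : X 3 * b3 m =
      ∑ j ∈ (((Box (m+1)).filter
          (fun j : T5 => (j.1 + j.2.1 + 2 * j.2.2.1 + j.2.2.2.1 + j.2.2.2.2 = m + 1
            ∧ j.1 < j.2.2.2.1) ∧ j.2.1 = 0 ∧ j.2.2.1 = 0)).filter
          (fun j : T5 => ¬ j.2.2.2.2 = 0)),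
        ((1 + j.1 : ℕ) : R4) *
          X 0 ^ j.2.1 * X 1 ^ j.2.2.1 * X 2 ^ j.2.2.2.1 * X 3 ^ j.2.2.2.2 := by
    rw [b3, Finset.mul_sum]
    refine Finset.sum_nbij'
      (fun j : T5 => (j.1, j.2.1, j.2.2.1, j.2.2.2.1, j.2.2.2.2 + 1))
      (fun j : T5 => (j.1, j.2.1, j.2.2.1, j.2.2.2.1, j.2.2.2.2 - 1)) ?_ ?_ ?_ ?_ ?_
    · rintro ⟨j0, j1, j2, j3, j4⟩ h
      simp only [Finset.mem_filter, mem_box] at h ⊢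
      omega
    · rintro ⟨j0, j1, j2, j3, j4⟩ h
      simp only [Finset.mem_filter, mem_box] at h ⊢
      omega
    · rintro ⟨j0, j1, j2, j3, j4⟩ h
      simp
    · rintro ⟨j0, j1, j2, j3, j4⟩ h
      simp only [Finset.mem_filter, mem_box] at h
      simp only [Prod.mk.injEq, eq_self_iff_true, true_and, and_true]
      omega
    · rintro ⟨j0, j1, j2, j3, j4⟩ h
      dsimp only
      ring
  rw [b3, ← hsplit, h2, add_sub_cancel_right, b4]
  apply Finset.sum_congr _ (fun _ _ => rfl)
  ext ⟨j0, j1, j2, j3, j4⟩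
  simp only [Finset.mem_filter, mem_box]
  omega

lemma shift5 (m : ℕ) : b4 (m + 1) - X 2 * b4 m = b5 (m + 1) := by
  classical
  have hsplit := Finset.sum_filter_add_sum_filter_not
    ((Box (m+1)).filter
      (fun j : T5 => (j.1 + j.2.1 + 2 * j.2.2.1 + j.2.2.2.1 + j.2.2.2.2 = m + 1
        ∧ j.1 < j.2.2.2.1) ∧ j.2.1 = 0 ∧ j.2.2.1 = 0 ∧ j.2.2.2.2 = 0))
    (fun j : T5 => j.2.2.2.1 = j.1 + 1)
    (fun j : T5 => ((1 + j.1 : ℕ) : R4) *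
      X 0 ^ j.2.1 * X 1 ^ j.2.2.1 * X 2 ^ j.2.2.2.1 * X 3 ^ j.2.2.2.2)
  have h2 : X 2 * b4 m =
      ∑ j ∈ (((Box (m+1)).filter
          (fun j : T5 => (j.1 + j.2.1 + 2 * j.2.2.1 + j.2.2.2.1 + j.2.2.2.2 = m + 1
            ∧ j.1 < j.2.2.2.1) ∧ j.2.1 = 0 ∧ j.2.2.1 = 0 ∧ j.2.2.2.2 = 0)).filter
          (fun j : T5 => ¬ j.2.2.2.1 = j.1 + 1)),
        ((1 + j.1 : ℕ) : R4) *
          X 0 ^ j.2.1 * X 1 ^ j.2.2.1 * X 2 ^ j.2.2.2.1 * X 3 ^ j.2.2.2.2 := by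
    rw [b4, Finset.mul_sum]
    refine Finset.sum_nbij'
      (fun j : T5 => (j.1, j.2.1, j.2.2.1, j.2.2.2.1 + 1, j.2.2.2.2))
      (fun j : T5 => (j.1, j.2.1, j.2.2.1, j.2.2.2.1 - 1, j.2.2.2.2)) ?_ ?_ ?_ ?_ ?_
    · rintro ⟨j0, j1, j2, j3, j4⟩ h
      simp only [Finset.mem_filter, mem_box] at h ⊢
      omega
    · rintro ⟨j0, j1, j2, j3, j4⟩ h
      simp only [Finset.mem_filter, mem_box] at h ⊢
      omega
    · rintro ⟨j0, j1, j2, j3, j4⟩ h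
      simp
    · rintro ⟨j0, j1, j2, j3, j4⟩ h
      simp only [Finset.mem_filter, mem_box] at h
      simp only [Prod.mk.injEq, eq_self_iff_true, true_and, and_true]
      omega
    · rintro ⟨j0, j1, j2, j3, j4⟩ h
      dsimp only
      ring
  rw [b4, ← hsplit, h2, add_sub_cancel_right, b5]
  apply Finset.sum_congr _ (fun _ _ => rfl)
  ext ⟨j0, j1, j2, j3, j4⟩
  simp only [Finset.mem_filter, mem_box]
  omega

lemma shift6 (m : ℕ) : b5 (m + 2) - X 2 * b5 m = b6 (m + 2) := by
  classical
  have key : X 2 * b5 m =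
      ∑ j ∈ (Box (m+2)).filter
          (fun j : T5 => (j.1 + j.2.1 + 2 * j.2.2.1 + j.2.2.2.1 + j.2.2.2.2 = m + 2
            ∧ j.2.2.2.1 = j.1 + 1) ∧ j.2.1 = 0 ∧ j.2.2.1 = 0 ∧ j.2.2.2.2 = 0),
        ((j.1 : ℕ) : R4) *
          X 0 ^ j.2.1 * X 1 ^ j.2.2.1 * X 2 ^ j.2.2.2.1 * X 3 ^ j.2.2.2.2 := by
    rw [b5, Finset.mul_sum]
    refine Finset.sum_nbij'
      (fun j : T5 => (j.1 + 1, j.2.1, j.2.2.1, j.2.2.2.1 + 1, j.2.2.2.2))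
      (fun j : T5 => (j.1 - 1, j.2.1, j.2.2.1, j.2.2.2.1 - 1, j.2.2.2.2)) ?_ ?_ ?_ ?_ ?_
    · rintro ⟨j0, j1, j2, j3, j4⟩ h
      simp only [Finset.mem_filter, mem_box] at h ⊢
      omega
    · rintro ⟨j0, j1, j2, j3, j4⟩ h
      simp only [Finset.mem_filter, mem_box] at h ⊢
      omega
    · rintro ⟨j0, j1, j2, j3, j4⟩ h
      simp
    · rintro ⟨j0, j1, j2, j3, j4⟩ h
      simp only [Finset.mem_filter, mem_box] at h
      simp only [Prod.mk.injEq, eq_self_iff_true, true_and, and_true]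
      omega
    · rintro ⟨j0, j1, j2, j3, j4⟩ h
      dsimp only
      push_cast
      ring
  rw [b5, key, ← Finset.sum_sub_distrib, b6]
  apply Finset.sum_congr rfl
  rintro ⟨j0, j1, j2, j3, j4⟩ -
  push_cast
  ring

lemma shift7 (m : ℕ) : b6 (m + 2) - X 2 * b6 m = 0 := by
  classical
  rw [sub_eq_zero]
  rw [b6, b6, Finset.mul_sum]
  refine (Finset.sum_nbij'
    (fun j : T5 => (j.1 + 1, j.2.1, j.2.2.1, j.2.2.2.1 + 1, j.2.2.2.2))
    (fun j : T5 => (j.1 - 1, j.2.1, j.2.2.1, j.2.2.2.1 - 1, j.2.2.2.2)) ?_ ?_ ?_ ?_ ?_).symm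
  · rintro ⟨j0, j1, j2, j3, j4⟩ h
    simp only [Finset.mem_filter, mem_box] at h ⊢
    omega
  · rintro ⟨j0, j1, j2, j3, j4⟩ h
    simp only [Finset.mem_filter, mem_box] at h ⊢
    omega
  · rintro ⟨j0, j1, j2, j3, j4⟩ h
    simp
  · rintro ⟨j0, j1, j2, j3, j4⟩ h
    simp only [Finset.mem_filter, mem_box] at h
    simp only [Prod.mk.injEq, eq_self_iff_true, true_and, and_true]
    omega
  · rintro ⟨j0, j1, j2, j3, j4⟩ h
    dsimp only
    ring


lemma step1 : PowerSeries.mk b * (1 - PowerSeries.C (R := R4) (X 0) * PowerSeries.X)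
    = PowerSeries.mk b1 := by
  rw [← pow_one (PowerSeries.X (R := R4)), mk_mul_one_sub]
  refine congrArg PowerSeries.mk (funext fun n => ?_)
  match n with
  | 0 => simp [b_zero, b1_zero]
  | (m+1) =>
    rw [if_pos (by omega : 1 ≤ m + 1), Nat.add_sub_cancel]
    exact shift1 m

lemma step2 : PowerSeries.mk b1 * (1 - PowerSeries.C (R := R4) (X 1) * PowerSeries.X ^ 2)
    = PowerSeries.mk b2 := by
  rw [mk_mul_one_sub]
  refine congrArg PowerSeries.mk (funext fun n => ?_)
  match n with
  | 0 => simp [b1_zero, b2_zero]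
  | 1 => rw [if_neg (by omega)]; rw [b1_one, b2_one]; ring
  | (m+2) =>
    rw [if_pos (by omega : 2 ≤ m + 2), Nat.add_sub_cancel]
    exact shift2 m

lemma step3 : PowerSeries.mk b2 * (1 - PowerSeries.C (R := R4) (X 3) * PowerSeries.X)
    = PowerSeries.mk b3 := by
  rw [← pow_one (PowerSeries.X (R := R4)), mk_mul_one_sub]
  refine congrArg PowerSeries.mk (funext fun n => ?_)
  match n with
  | 0 => simp [b2_zero, b3_zero]
  | (m+1) =>
    rw [if_pos (by omega : 1 ≤ m + 1), Nat.add_sub_cancel]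
    exact shift3 m

lemma step4 : PowerSeries.mk b3 * (1 - PowerSeries.C (R := R4) (X 3) * PowerSeries.X)
    = PowerSeries.mk b4 := by
  rw [← pow_one (PowerSeries.X (R := R4)), mk_mul_one_sub]
  refine congrArg PowerSeries.mk (funext fun n => ?_)
  match n with
  | 0 => simp [b3_zero, b4_zero]
  | (m+1) =>
    rw [if_pos (by omega : 1 ≤ m + 1), Nat.add_sub_cancel]
    exact shift4 m

lemma step5 : PowerSeries.mk b4 * (1 - PowerSeries.C (R := R4) (X 2) * PowerSeries.X)
    = PowerSeries.mk b5 := by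
  rw [← pow_one (PowerSeries.X (R := R4)), mk_mul_one_sub]
  refine congrArg PowerSeries.mk (funext fun n => ?_)
  match n with
  | 0 => simp [b4_zero, b5_zero]
  | (m+1) =>
    rw [if_pos (by omega : 1 ≤ m + 1), Nat.add_sub_cancel]
    exact shift5 m

lemma step6 : PowerSeries.mk b5 * (1 - PowerSeries.C (R := R4) (X 2) * PowerSeries.X ^ 2)
    = PowerSeries.mk b6 := by
  rw [mk_mul_one_sub]
  refine congrArg PowerSeries.mk (funext fun n => ?_)
  match n with
  | 0 => simp [b5_zero, b6_zero]
  | 1 => rw [if_neg (by omega)]; rw [b5_one, b6_one]; ring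
  | (m+2) =>
    rw [if_pos (by omega : 2 ≤ m + 2), Nat.add_sub_cancel]
    exact shift6 m

lemma step7 : PowerSeries.mk b6 * (1 - PowerSeries.C (R := R4) (X 2) * PowerSeries.X ^ 2)
    = PowerSeries.C (R := R4) (X 2) * PowerSeries.X := by
  rw [mk_mul_one_sub]
  have hfin : PowerSeries.mk (fun n : ℕ => if n = 1 then (X 2 : R4) else 0)
      = PowerSeries.C (R := R4) (X 2) * PowerSeries.X := by
    ext n
    rw [PowerSeries.coeff_mk, PowerSeries.coeff_C_mul, PowerSeries.coeff_X]
    split_ifs <;> simp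
  rw [← hfin]
  refine congrArg PowerSeries.mk (funext fun n => ?_)
  match n with
  | 0 => simp [b6_zero]
  | 1 => rw [if_neg (by omega), if_pos rfl, b6_one]; ring
  | (m+2) =>
    rw [if_pos (by omega : 2 ≤ m + 2), Nat.add_sub_cancel, if_neg (by omega)]
    exact shift7 m

lemma main :
    PowerSeries.mk b *
      ((1 - PowerSeries.C (R := R4) (X 0) * PowerSeries.X) *
        (1 - PowerSeries.C (R := R4) (X 1) * PowerSeries.X ^ 2) *
        (1 - PowerSeries.C (R := R4) (X 2) * PowerSeries.X) *
        (1 - PowerSeries.C (R := R4) (X 2) * PowerSeries.X ^ 2) ^ 2 *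
        (1 - PowerSeries.C (R := R4) (X 3) * PowerSeries.X) ^ 2) =
      PowerSeries.C (R := R4) (X 2) * PowerSeries.X := by
  rw [show PowerSeries.mk b *
      ((1 - PowerSeries.C (R := R4) (X 0) * PowerSeries.X) *
        (1 - PowerSeries.C (R := R4) (X 1) * PowerSeries.X ^ 2) *
        (1 - PowerSeries.C (R := R4) (X 2) * PowerSeries.X) *
        (1 - PowerSeries.C (R := R4) (X 2) * PowerSeries.X ^ 2) ^ 2 *
        (1 - PowerSeries.C (R := R4) (X 3) * PowerSeries.X) ^ 2) =
      ((((((PowerSeries.mk b * (1 - PowerSeries.C (R := R4) (X 0) * PowerSeries.X)) *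
        (1 - PowerSeries.C (R := R4) (X 1) * PowerSeries.X ^ 2)) *
        (1 - PowerSeries.C (R := R4) (X 3) * PowerSeries.X)) *
        (1 - PowerSeries.C (R := R4) (X 3) * PowerSeries.X)) *
        (1 - PowerSeries.C (R := R4) (X 2) * PowerSeries.X)) *
        (1 - PowerSeries.C (R := R4) (X 2) * PowerSeries.X ^ 2)) *
        (1 - PowerSeries.C (R := R4) (X 2) * PowerSeries.X ^ 2) from by ring]
  rw [step1, step2, step3, step4, step5, step6]
  exact step7

end Stmt4Aux

/-- Over `R = ℚ[x1,x2,x3,x4]`, with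
`b_m = ∑ (1+j0)(1+j4)·x1^j1 x2^j2 x3^j3 x4^j4`, summed over `(j0,…,j4) ∈ ℕ⁵` with
`j0+j1+2j2+j3+j4 = m` and `j0 < j3`, we have
`(∑_m b_m t^m)·(1-t·x1)(1-t²·x2)(1-t·x3)(1-t²·x3)²(1-t·x4)² = x3·t` in `R[[t]]`. -/
theorem stmt_4 :
    (PowerSeries.mk (fun m : ℕ =>
      ∑ j ∈ (Finset.range (m + 1) ×ˢ Finset.range (m + 1) ×ˢ Finset.range (m + 1) ×ˢ
            Finset.range (m + 1) ×ˢ Finset.range (m + 1)).filter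
          (fun j => j.1 + j.2.1 + 2 * j.2.2.1 + j.2.2.2.1 + j.2.2.2.2 = m ∧ j.1 < j.2.2.2.1),
        (((1 + j.1) * (1 + j.2.2.2.2) : ℕ) : MvPolynomial (Fin 4) ℚ) *
          MvPolynomial.X 0 ^ j.2.1 * MvPolynomial.X 1 ^ j.2.2.1 *
          MvPolynomial.X 2 ^ j.2.2.2.1 * MvPolynomial.X 3 ^ j.2.2.2.2)) *
      ((1 - PowerSeries.C (R := MvPolynomial (Fin 4) ℚ) (MvPolynomial.X 0) * PowerSeries.X) *
        (1 - PowerSeries.C (R := MvPolynomial (Fin 4) ℚ) (MvPolynomial.X 1) * PowerSeries.X ^ 2) *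
        (1 - PowerSeries.C (R := MvPolynomial (Fin 4) ℚ) (MvPolynomial.X 2) * PowerSeries.X) *
        (1 - PowerSeries.C (R := MvPolynomial (Fin 4) ℚ) (MvPolynomial.X 2) * PowerSeries.X ^ 2) ^ 2 *
        (1 - PowerSeries.C (R := MvPolynomial (Fin 4) ℚ) (MvPolynomial.X 3) * PowerSeries.X) ^ 2) =
      PowerSeries.C (R := MvPolynomial (Fin 4) ℚ) (MvPolynomial.X 2) * PowerSeries.X :=
  Stmt4Aux.main
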